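/- If 3 ≤ d ≤ 9, β and R are positive integers with β ≥ 0.6R and R ≥ 750, then Σ_{i=1}^{⌊d/2⌋} S_2(d,i) · β^(i-d+1) ≤ R^(-1/2). -/

import Mathlib

/-- `S2 d i` is the number of partitions of a `d`-element set into exactly `i`
blocks, each of size at least `2`. -/
def S2 (d i : ℕ) : ℕ :=
  (Finset.univ.filter fun P : Finset (Finset (Fin d)) =>
    P.card = i ∧ (∀ p ∈ P, 2 ≤ p.card) ∧
      ∀ v : Fin d, (P.filter fun p => v ∈ p).card = 1).card


open Finset

variable {d : ℕ}

/-- the min of the block containing `v` -/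
def mm (P : Finset (Finset (Fin d))) (v : Fin d) : Fin d :=
  if h : (Finset.univ.filter fun w => ∃ p ∈ P, v ∈ p ∧ w ∈ p).Nonempty
  then (Finset.univ.filter fun w => ∃ p ∈ P, v ∈ p ∧ w ∈ p).min' h else v

lemma exists_block (P : Finset (Finset (Fin d)))
    (hcov : ∀ v : Fin d, (P.filter fun p => v ∈ p).card = 1) (v : Fin d) :
    ∃ b ∈ P, v ∈ b ∧ ∀ p ∈ P, v ∈ p → p = b := by
  obtain ⟨b, hb⟩ := Finset.card_eq_one.mp (hcov v)
  have hbmem : b ∈ P.filter fun p => v ∈ p := by rw [hb]; exact mem_singleton_self b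
  rw [mem_filter] at hbmem
  refine ⟨b, hbmem.1, hbmem.2, fun p hp hvp => ?_⟩
  have : p ∈ P.filter fun p => v ∈ p := mem_filter.mpr ⟨hp, hvp⟩
  rw [hb, mem_singleton] at this; exact this

lemma Sv_eq (P : Finset (Finset (Fin d))) (v : Fin d) (b : Finset (Fin d))
    (hbP : b ∈ P) (hvb : v ∈ b) (huniq : ∀ p ∈ P, v ∈ p → p = b) :
    (Finset.univ.filter fun w => ∃ p ∈ P, v ∈ p ∧ w ∈ p) = b := by
  ext w
  simp only [mem_filter, mem_univ, true_and]
  constructor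
  · rintro ⟨p, hp, hvp, hwp⟩; rwa [huniq p hp hvp] at hwp
  · intro hw; exact ⟨b, hbP, hvb, hw⟩

lemma mm_eq (P : Finset (Finset (Fin d))) (v : Fin d) (b : Finset (Fin d))
    (hbP : b ∈ P) (hvb : v ∈ b) (huniq : ∀ p ∈ P, v ∈ p → p = b) :
    mm P v = b.min' ⟨v, hvb⟩ := by
  unfold mm
  rw [dif_pos]
  · congr 1 <;> rw [Sv_eq P v b hbP hvb huniq]
  · rw [Sv_eq P v b hbP hvb huniq]; exact ⟨v, hvb⟩

lemma fiber_eq (P : Finset (Finset (Fin d)))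
    (hcov : ∀ v : Fin d, (P.filter fun p => v ∈ p).card = 1)
    (v : Fin d) (b : Finset (Fin d))
    (hbP : b ∈ P) (hvb : v ∈ b) (huniq : ∀ p ∈ P, v ∈ p → p = b) :
    (Finset.univ.filter fun w => mm P w = mm P v) = b := by
  ext w
  simp only [mem_filter, mem_univ, true_and]
  obtain ⟨c, hcP, hwc, hcuniq⟩ := exists_block P hcov w
  rw [mm_eq P w c hcP hwc hcuniq, mm_eq P v b hbP hvb huniq]
  constructor
  · intro h
    -- the common min lies in both blocks, so blocks coincide
    have h1 : c.min' ⟨w, hwc⟩ ∈ c := Finset.min'_mem _ _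
    have h2 : c.min' ⟨w, hwc⟩ ∈ b := h ▸ Finset.min'_mem b ⟨v, hvb⟩
    obtain ⟨e, heP, hme, heuniq⟩ := exists_block P hcov (c.min' ⟨w, hwc⟩)
    have hce : c = e := heuniq c hcP h1
    have hbe : b = e := heuniq b hbP h2
    rw [hbe, ← hce]; exact hwc
  · intro hwb
    have : b = c := hcuniq b hbP hwb
    subst this; rfl

lemma P_eq_image (P : Finset (Finset (Fin d)))
    (hsize : ∀ p ∈ P, 2 ≤ p.card)
    (hcov : ∀ v : Fin d, (P.filter fun p => v ∈ p).card = 1) :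
    P = Finset.image (fun v => Finset.univ.filter fun w => mm P w = mm P v)
      Finset.univ := by
  ext p
  simp only [mem_image, mem_univ, true_and]
  constructor
  · intro hp
    have hne : p.Nonempty := Finset.card_pos.mp (by have := hsize p hp; omega)
    obtain ⟨v, hvp⟩ := hne
    refine ⟨v, ?_⟩
    obtain ⟨b, hbP, hvb, huniq⟩ := exists_block P hcov v
    rw [fiber_eq P hcov v b hbP hvb huniq]
    exact (huniq p hp hvp).symm
  · rintro ⟨v, rfl⟩
    obtain ⟨b, hbP, hvb, huniq⟩ := exists_block P hcov v
    rw [fiber_eq P hcov v b hbP hvb huniq]; exact hbP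

/-- target set of functions -/
def T (d : ℕ) : Finset (Fin d → Fin d) :=
  Finset.univ.filter fun f => (∀ v, f v ≤ v) ∧
    ∀ v, 2 ≤ (Finset.univ.filter fun w => f w = f v).card

lemma card_A_le (d : ℕ) :
    (Finset.univ.filter fun P : Finset (Finset (Fin d)) =>
      (∀ p ∈ P, 2 ≤ p.card) ∧
        ∀ v : Fin d, (P.filter fun p => v ∈ p).card = 1).card ≤ (T d).card := by
  apply Finset.card_le_card_of_injOn mm
  · intro P hP
    rw [mem_coe, mem_filter] at hP
    obtain ⟨-, hsize, hcov⟩ := hP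
    rw [mem_coe, T, mem_filter]
    refine ⟨mem_univ _, fun v => ?_, fun v => ?_⟩
    · obtain ⟨b, hbP, hvb, huniq⟩ := exists_block P hcov v
      rw [mm_eq P v b hbP hvb huniq]
      exact Finset.min'_le _ _ hvb
    · obtain ⟨b, hbP, hvb, huniq⟩ := exists_block P hcov v
      rw [fiber_eq P hcov v b hbP hvb huniq]
      exact hsize b hbP
  · intro P hP Q hQ h
    simp only [Finset.coe_filter, Set.mem_setOf_eq, mem_univ, true_and] at hP hQ
    rw [P_eq_image P hP.1 hP.2, P_eq_image Q hQ.1 hQ.2, h]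

lemma prod_id_succ (d : ℕ) : ∏ v : Fin d, (v.val + 1) = d.factorial := by
  rw [Fin.prod_univ_eq_prod_range (fun i => i + 1) d]
  induction d with
  | zero => simp
  | succ n ih => rw [Finset.prod_range_succ, ih, Nat.factorial_succ, mul_comm]

lemma card_T_le (d : ℕ) : (T d).card ≤ d.factorial := by
  have h1 : (T d).card ≤ (Finset.univ : Finset (∀ v : Fin d, Fin (v.val + 1))).card := by
    apply Finset.card_le_card_of_injOn
      (fun (f : Fin d → Fin d) (v : Fin d) =>
        if h : (f v : ℕ) < v.val + 1 then (⟨(f v : ℕ), h⟩ : Fin (v.val + 1))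
        else ⟨0, Nat.succ_pos _⟩)
    · intro f _; exact mem_univ _
    · intro f hf g hg h
      simp only [T, Finset.coe_filter, Set.mem_setOf_eq, mem_univ, true_and] at hf hg
      funext v
      have hfv : (f v : ℕ) < v.val + 1 := Nat.lt_succ_of_le (hf.1 v)
      have hgv : (g v : ℕ) < v.val + 1 := Nat.lt_succ_of_le (hg.1 v)
      have := congrFun h v
      simp only [dif_pos hfv, dif_pos hgv] at this
      rw [Fin.mk.injEq] at this
      exact Fin.ext this
  rw [Finset.card_univ, Fintype.card_pi] at h1
  simpa [Fintype.card_fin, prod_id_succ] using h1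

lemma sum_S2_le (d : ℕ) (t : Finset ℕ) : ∑ i ∈ t, S2 d i ≤ (T d).card := by
  set A : Finset (Finset (Finset (Fin d))) :=
    Finset.univ.filter fun P => (∀ p ∈ P, 2 ≤ p.card) ∧
      ∀ v : Fin d, (P.filter fun p => v ∈ p).card = 1 with hA
  have hS2 : ∀ i, S2 d i = (A.filter fun P => P.card = i).card := by
    intro i
    rw [S2, hA, Finset.filter_filter]
    congr 1
    ext P
    simp only [mem_filter, mem_univ, true_and]
    tauto
  have key := Finset.card_eq_sum_card_fiberwise
    (s := A.filter fun P => P.card ∈ t) (t := t) (f := Finset.card)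
    (fun x hx => (mem_filter.mp hx).2)
  have h2 : ∑ i ∈ t, S2 d i = (A.filter fun P => P.card ∈ t).card := by
    rw [key]
    refine Finset.sum_congr rfl fun i hi => ?_
    rw [hS2, Finset.filter_filter]
    congr 1
    ext P
    simp only [hA, Finset.mem_filter, Finset.mem_univ, true_and]
    have hit : ∀ c : ℕ, c = i → c ∈ t := fun c hc => hc ▸ hi
    tauto
  rw [h2]
  exact le_trans (Finset.card_le_card (Finset.filter_subset _ _)) (card_A_le d)

lemma num_key (β R F m : ℕ) (hm : 1 ≤ m) (hβR : (β:ℝ) ≥ 0.6 * R) (hR750 : 750 ≤ R)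
    (hF : (F:ℝ) * 27 ≤ 0.6 ^ m * 27 ^ (2*m)) :
    (F:ℝ) * (β:ℝ) ^ (-(m:ℤ)) ≤ (R:ℝ) ^ (-(1:ℝ)/2) := by
  have hR0 : (0:ℝ) < R := by exact_mod_cast Nat.lt_of_lt_of_le (by norm_num) hR750
  have hR729 : (729:ℝ) ≤ R := by
    have : (729:ℕ) ≤ R := by omega
    exact_mod_cast this
  set s : ℝ := Real.sqrt R with hsdef
  have hs0 : 0 < s := Real.sqrt_pos.mpr hR0
  have hs27 : (27:ℝ) ≤ s := by
    have h729 : (27:ℝ) = Real.sqrt 729 := by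
      rw [show (729:ℝ) = 27^2 by norm_num, Real.sqrt_sq (by norm_num)]
    rw [h729, hsdef]
    exact Real.sqrt_le_sqrt hR729
  have hs2 : s^2 = R := Real.sq_sqrt hR0.le
  have hβ2 : 0.6 * s^2 ≤ β := by rw [hs2]; exact hβR
  have hβ0 : (0:ℝ) < β := lt_of_lt_of_le (by positivity) hβ2
  set t : ℝ := s / 27 with ht
  have ht1 : (1:ℝ) ≤ t := by rw [ht, le_div_iff₀ (by norm_num)]; linarith
  have hst : s = 27 * t := by rw [ht]; field_simp
  have key : (F:ℝ) * s ≤ (β:ℝ)^m := by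
    calc (F:ℝ) * s = ((F:ℝ)*27)*t := by rw [hst]; ring
    _ ≤ (0.6^m * 27^(2*m)) * t := mul_le_mul_of_nonneg_right hF (by linarith)
    _ ≤ (0.6^m * 27^(2*m)) * t^(2*m) :=
        mul_le_mul_of_nonneg_left (le_self_pow₀ ht1 (by omega)) (by positivity)
    _ = 0.6^m * (27*t)^(2*m) := by rw [mul_pow]; ring
    _ = 0.6^m * s^(2*m) := by rw [← hst]
    _ = (0.6 * s^2)^m := by rw [mul_pow, ← pow_mul]
    _ ≤ (β:ℝ)^m := pow_le_pow_left₀ (by positivity) hβ2 m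
  have hrw : (R:ℝ)^(-(1:ℝ)/2) = s⁻¹ := by
    rw [show -(1:ℝ)/2 = -(1/2) by norm_num, Real.rpow_neg hR0.le, hsdef,
      Real.sqrt_eq_rpow]
  have hβm : (β:ℝ)^(-(m:ℤ)) = ((β:ℝ)^m)⁻¹ := by
    rw [zpow_neg, zpow_natCast]
  rw [hrw, hβm]
  have hbm : (0:ℝ) < (β:ℝ)^m := by positivity
  rw [mul_inv_le_iff₀ hbm, inv_mul_eq_div]
  exact (le_div_iff₀ hs0).mpr key

lemma final_helper (d β R F m : ℕ) (hm : 1 ≤ m)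
    (hβR : (β:ℝ) ≥ 0.6 * R) (hR750 : 750 ≤ R) (hβ1 : (1:ℝ) ≤ β)
    (he : ((d/2 : ℕ):ℤ) - d + 1 = -(m:ℤ))
    (hFd : (T d).card ≤ F)
    (hF : (F:ℝ) * 27 ≤ 0.6 ^ m * 27 ^ (2*m)) :
    ∑ i ∈ Finset.Icc 1 (d / 2), (S2 d i : ℝ) * (β : ℝ) ^ ((i : ℤ) - d + 1) ≤
      (R : ℝ) ^ (-(1 : ℝ) / 2) := by
  have hβ0 : (0:ℝ) < β := by linarith
  have step1 : ∑ i ∈ Finset.Icc 1 (d/2), (S2 d i:ℝ) * (β:ℝ)^((i:ℤ)-d+1)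
      ≤ (∑ i ∈ Finset.Icc 1 (d/2), (S2 d i:ℝ)) * (β:ℝ)^(((d/2:ℕ):ℤ)-d+1) := by
    rw [Finset.sum_mul]
    apply Finset.sum_le_sum
    intro i hi
    have hi2 : i ≤ d/2 := (Finset.mem_Icc.mp hi).2
    have hle : (i:ℤ)-d+1 ≤ ((d/2:ℕ):ℤ)-d+1 := by
      have : (i:ℤ) ≤ ((d/2:ℕ):ℤ) := by exact_mod_cast hi2
      omega
    exact mul_le_mul_of_nonneg_left (zpow_le_zpow_right₀ hβ1 hle) (by positivity)
  refine le_trans step1 ?_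
  rw [he]
  have hsum : ((∑ i ∈ Finset.Icc 1 (d/2), S2 d i : ℕ) : ℝ) ≤ (F:ℝ) := by
    exact_mod_cast le_trans (sum_S2_le d _) hFd
  calc (∑ i ∈ Finset.Icc 1 (d/2), (S2 d i:ℝ)) * (β:ℝ)^(-(m:ℤ))
      ≤ (F:ℝ) * (β:ℝ)^(-(m:ℤ)) := by
        apply mul_le_mul_of_nonneg_right _ (by positivity)
        push_cast at hsum ⊢
        exact hsum
    _ ≤ _ := num_key β R F m hm hβR hR750 hF

theorem stmt_12 (d β R : ℕ) (hβ : 0 < β) (hR : 0 < R)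
    (hd3 : 3 ≤ d) (hd9 : d ≤ 9) (hβR : (β : ℝ) ≥ 0.6 * R) (hR750 : 750 ≤ R) :
    ∑ i ∈ Finset.Icc 1 (d / 2), (S2 d i : ℝ) * (β : ℝ) ^ ((i : ℤ) - d + 1) ≤
      (R : ℝ) ^ (-(1 : ℝ) / 2) := by
  have hR' : (750:ℝ) ≤ R := by exact_mod_cast hR750
  have hβ1 : (1:ℝ) ≤ β := by nlinarith
  have hT4 : (T 4).card ≤ 5 := by decide
  interval_cases d
  · exact final_helper 3 β R 6 1 (by norm_num) hβR hR750 hβ1 (by decide)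
      (le_trans (card_T_le 3) (by decide)) (by norm_num)
  · exact final_helper 4 β R 5 1 (by norm_num) hβR hR750 hβ1 (by decide) hT4 (by norm_num)
  · exact final_helper 5 β R 120 2 (by norm_num) hβR hR750 hβ1 (by decide)
      (le_trans (card_T_le 5) (by decide)) (by norm_num)
  · exact final_helper 6 β R 720 2 (by norm_num) hβR hR750 hβ1 (by decide)
      (le_trans (card_T_le 6) (by decide)) (by norm_num)
  · exact final_helper 7 β R 5040 3 (by norm_num) hβR hR750 hβ1 (by decide)
      (le_trans (card_T_le 7) (by decide)) (by norm_num)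
  · exact final_helper 8 β R 40320 3 (by norm_num) hβR hR750 hβ1 (by decide)
      (le_trans (card_T_le 8) (by decide)) (by norm_num)
  · exact final_helper 9 β R 362880 4 (by norm_num) hβR hR750 hβ1 (by decide)
      (le_trans (card_T_le 9) (by decide)) (by norm_num)
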